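/- Let Â be a Courant extension of a transitive Lie algebroid A with g = ker(π_A). Then the commutative square formed by g(Â) → A^∨ (induced by the pairing ⟨,⟩ : g(Â) ⊗ Ā → O_X), g(Â) → g (the projection), A^∨ → g^∨ (dual of the inclusion g → A), and g → g^∨ (induced pairing) is Cartesian; consequently g(Â) ≅ A^∨ ×_{g^∨} g canonically. -/
import Mathlib


noncomputable section

/-- The "vector fields" on the algebraic model of the space with function ring `O`. -/
abbrev Vec (O : Type*) [CommRing O] [Algebra ℂ O] := Derivation ℂ O O

/-- Algebraic model of a Courant `O`-algebroid: an `O`-module `Q` equipped with a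
Leibniz bracket, an `O`-linear anchor into vector fields, a symmetric `O`-bilinear
pairing, and a derivation `∂ : O → Q`, subject to the Courant axioms. -/
structure CourantAlgebroid (O : Type*) [CommRing O] [Algebra ℂ O]
    (Q : Type*) [AddCommGroup Q] [Module O Q] where
  bracket : Q → Q → Q
  bracket_add_left : ∀ q₁ q₂ q₃, bracket (q₁ + q₂) q₃ = bracket q₁ q₃ + bracket q₂ q₃
  bracket_add_right : ∀ q₁ q₂ q₃, bracket q₁ (q₂ + q₃) = bracket q₁ q₂ + bracket q₁ q₃
  anchor : Q →ₗ[O] Vec O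
  pair : Q →ₗ[O] Q →ₗ[O] O
  pair_symm : ∀ q₁ q₂, pair q₁ q₂ = pair q₂ q₁
  par : O → Q
  par_add : ∀ f g, par (f + g) = par f + par g
  par_mul : ∀ f g, par (f * g) = f • par g + g • par f
  anchor_par : ∀ f, anchor (par f) = 0
  anchor_bracket : ∀ q₁ q₂, anchor (bracket q₁ q₂) = ⁅anchor q₁, anchor q₂⁆
  jacobi : ∀ q q₁ q₂, bracket q (bracket q₁ q₂)
      = bracket (bracket q q₁) q₂ + bracket q₁ (bracket q q₂)
  leibniz : ∀ (q₁ q₂ : Q) (f : O), bracket q₁ (f • q₂) = f • bracket q₁ q₂ + anchor q₁ f • q₂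
  invar : ∀ q q₁ q₂, pair (bracket q q₁) q₂ + pair q₁ (bracket q q₂)
      = anchor q (pair q₁ q₂)
  bracket_par : ∀ (q : Q) (f : O), bracket q (par f) = par (anchor q f)
  pair_par : ∀ (q : Q) (f : O), pair q (par f) = anchor q f
  symm_bracket : ∀ q₁ q₂, bracket q₁ q₂ + bracket q₂ q₁ = par (pair q₁ q₂)

/-- `Ω_Q`: the `O`-submodule of `Q` generated by the image of the derivation `∂`. -/
def CourantAlgebroid.Omega {O : Type*} [CommRing O] [Algebra ℂ O]
    {Q : Type*} [AddCommGroup Q] [Module O Q] (C : CourantAlgebroid O Q) : Submodule O Q :=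
  Submodule.span O (Set.range C.par)

/-- Evaluation of vector fields at `f`, as an `O`-linear one-form `df`. -/
def evalForm (O : Type*) [CommRing O] [Algebra ℂ O] (f : O) : Vec O →ₗ[O] O where
  toFun ξ := ξ f
  map_add' ξ η := by simp
  map_smul' g ξ := by simp

/-- for a Courant extension `Â` (here `Q`) of a transitive Lie
algebroid `A = Q̄` with `g = ker π_A`, the square formed by
`g(Â) → A^∨` (pairing), `g(Â) → g` (projection mod `Ω¹`), `A^∨ → g^∨`
(restriction) and `g → g^∨` (induced pairing) is Cartesian, so that
`g(Â) ≅ A^∨ ×_{g^∨} g` canonically.  Concretely: pairing against an element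
of `g(Â) = ker π_Q` yields a functional killing `Ω_Q` (i.e. a functional on
`A`), and for every functional `lam` on `A` and every `b ∈ g(Â)` (representing
an element of `g` mod `Ω_Q`) whose restrictions to `g` agree, there is a unique
element `h` of `g(Â)` inducing `lam` via the pairing and congruent to `b`
modulo `Ω¹ = Ω_Q`. -/
theorem gQhat_is_fibre_product
    (O : Type*) [CommRing O] [Algebra ℂ O]
    (Q : Type*) [AddCommGroup Q] [Module O Q]
    (C : CourantAlgebroid O Q)
    (hsurj : Function.Surjective C.anchor)
    (i : (Vec O →ₗ[O] O) → Q)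
    (hi_add : ∀ α β, i (α + β) = i α + i β)
    (hi_smul : ∀ (f : O) α, i (f • α) = f • i α)
    (hi_par : ∀ f : O, C.par f = i (evalForm O f))
    (hi_pair : ∀ (q : Q) α, C.pair q (i α) = α (C.anchor q))
    (hi_inj : Function.Injective i)
    (hOmega : ∀ w ∈ C.Omega, ∃ α, w = i α)
    (hmem : ∀ α, i α ∈ C.Omega) :
    (∀ h ∈ LinearMap.ker C.anchor, ∀ w ∈ C.Omega, C.pair h w = 0)
    ∧ (∀ lam : Q →ₗ[O] O, (∀ w ∈ C.Omega, lam w = 0) →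
        ∀ b ∈ LinearMap.ker C.anchor, (∀ c ∈ LinearMap.ker C.anchor, lam c = C.pair b c) →
        ∃! h : Q, h ∈ LinearMap.ker C.anchor
          ∧ (∀ q : Q, C.pair h q = lam q)
          ∧ h - b ∈ C.Omega) := by
  have Omega_le_ker : C.Omega ≤ LinearMap.ker C.anchor := by
    intro w hw
    induction hw using Submodule.span_induction with
    | mem x hx =>
      obtain ⟨f, rfl⟩ := hx
      simpa using C.anchor_par f
    | zero => simp
    | add x y _ _ hx hy => simpa using add_mem hx hy
    | smul a x _ hx => exact Submodule.smul_mem _ a hx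
  constructor
  · intro h hh w hw
    induction hw using Submodule.span_induction with
    | mem x hx =>
      obtain ⟨f, rfl⟩ := hx
      rw [C.pair_par]
      rw [LinearMap.mem_ker] at hh
      rw [hh]; rfl
    | zero => simp
    | add x y _ _ hx hy => simp [hx, hy]
    | smul a x _ hx => simp [hx]
  · intro lam hlam b hb hagree
    -- the linear functional lam - pair b vanishes on ker anchor
    set φ : Q →ₗ[O] O := lam - C.pair b with hφ
    have hker : LinearMap.ker C.anchor ≤ LinearMap.ker φ := by
      intro c hc
      simp only [hφ, LinearMap.mem_ker, LinearMap.sub_apply]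
      rw [hagree c hc]; ring
    -- factor through the anchor
    let e := C.anchor.quotKerEquivOfSurjective hsurj
    let α : Vec O →ₗ[O] O := (LinearMap.ker C.anchor).liftQ φ hker ∘ₗ (e.symm : Vec O →ₗ[O] _)
    have hα : ∀ q : Q, α (C.anchor q) = φ q := by
      intro q
      have : e (Submodule.Quotient.mk q) = C.anchor q := rfl
      have h2 : e.symm (C.anchor q) = Submodule.Quotient.mk q := by
        rw [← this]; exact e.symm_apply_apply _
      simp only [α, LinearMap.comp_apply, LinearMap.coe_coe]
      erw [h2]
      exact Submodule.liftQ_apply _ φ q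
    have hiα_ker : i α ∈ LinearMap.ker C.anchor := Omega_le_ker (hmem α)
    refine ⟨b + i α, ⟨?_, ?_, ?_⟩, ?_⟩
    · exact add_mem hb hiα_ker
    · intro q
      have h1 : C.pair (i α) q = α (C.anchor q) := by
        rw [C.pair_symm]; exact hi_pair q α
      have := hα q
      simp only [hφ, LinearMap.sub_apply] at this
      simp only [map_add, LinearMap.add_apply, h1, this]
      ring
    · simpa using hmem α
    · rintro h' ⟨hk', hp', hd'⟩
      -- h' - (b + i α) ∈ Omega and pairs to zero with everything
      have hdiff : h' - (b + i α) ∈ C.Omega := by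
        have : h' - (b + i α) = (h' - b) - i α := by abel
        rw [this]
        exact sub_mem hd' (hmem α)
      obtain ⟨β, hβ⟩ := hOmega _ hdiff
      have hzero : ∀ q : Q, β (C.anchor q) = 0 := by
        intro q
        have h1 : C.pair (h' - (b + i α)) q = 0 := by
          have hpr : C.pair (b + i α) q = lam q := by
            have h1 : C.pair (i α) q = α (C.anchor q) := by
              rw [C.pair_symm]; exact hi_pair q α
            have := hα q
            simp only [hφ, LinearMap.sub_apply] at this
            simp only [map_add, LinearMap.add_apply, h1, this]
            ring
          simp only [map_sub, LinearMap.sub_apply, hp' q, hpr]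
          ring
        rw [hβ] at h1
        rw [C.pair_symm] at h1
        rw [hi_pair q β] at h1
        exact h1
      have hβ0 : β = 0 := by
        ext ξ
        obtain ⟨q, rfl⟩ := hsurj ξ
        simpa using hzero q
      have hi0 : i (0 : Vec O →ₗ[O] O) = 0 := by
        have := hi_smul (0 : O) 0
        simpa using this
      have : h' - (b + i α) = 0 := by rw [hβ, hβ0, hi0]
      exact sub_eq_zero.mp this
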